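/- Let Y ↔ X ↔ (U,V) form a Markov chain of random variables on finite alphabets. If there exists a Markov kernel M from U's alphabet to V's alphabet such that for every x, the distribution of V given X = x equals the composition of M with the conditional distribution of U given X = x, then I(Y;U) ≥ I(Y;V). -/

import Mathlib

open Finset

/-- A probability vector on a finite set. -/
def ProbFun {A : Type*} [Fintype A] (p : A → ℝ) : Prop :=
  (∀ a, 0 ≤ p a) ∧ ∑ a, p a = 1

/-- A joint probability on finite sets. -/
def JointFun {A B : Type*} [Fintype A] [Fintype B] (p : A → B → ℝ) : Prop :=
  (∀ a b, 0 ≤ p a b) ∧ ∑ a, ∑ b, p a b = 1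

/-- A Markov kernel (stochastic matrix) from `A` to `B`. -/
def Kern {A B : Type*} [Fintype B] (K : A → B → ℝ) : Prop :=
  (∀ a b, 0 ≤ K a b) ∧ ∀ a, ∑ b, K a b = 1

/-- Composition of kernels: `(M ∘ K)(v|x) = ∑ u K(u|x) M(v|u)`. -/
def kcomp {X U V : Type*} [Fintype U] (M : U → V → ℝ) (K : X → U → ℝ) : X → V → ℝ :=
  fun x v => ∑ u, K x u * M u v

/-- Pushforward of a distribution through a kernel. -/
def kpush {X U : Type*} [Fintype X] (K : X → U → ℝ) (q : X → ℝ) : U → ℝ :=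
  fun u => ∑ x, q x * K x u

/-- Mutual information of a finite joint pmf. -/
noncomputable def MIfin {A B : Type*} [Fintype A] [Fintype B] (p : A → B → ℝ) : ℝ :=
  ∑ a, ∑ b, p a b * Real.log (p a b / ((∑ b', p a b') * (∑ a', p a' b)))

/-- Joint distribution of concept `Y` and embedding, for a joint `p` on `Y × X`
and a channel `K` from `X` (this encodes the Markov chain `Y ↔ X ↔ U`). -/
def jointOut {Y X U : Type*} [Fintype X] (p : Y → X → ℝ) (K : X → U → ℝ) : Y → U → ℝ :=
  fun y u => ∑ x, p y x * K x u

/-- Total variation distance on a finite set. -/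
noncomputable def tvDist {A : Type*} [Fintype A] (p q : A → ℝ) : ℝ :=
  (∑ a, |p a - q a|) / 2

/-- Bayes risk: infimum over randomized decision rules of the error probability. -/
noncomputable def bayesRisk {Y U : Type*} [Fintype Y] [Fintype U] (r : Y → U → ℝ) : ℝ :=
  sInf { e | ∃ ρ : U → Y → ℝ, Kern ρ ∧ e = 1 - ∑ y, ∑ u, r y u * ρ u y }

/-- Le Cam deficiency of `KV` relative to `KU` under input distribution `pX`. -/
noncomputable def deficiency {X U V : Type*} [Fintype X] [Fintype U] [Fintype V]
    (pX : X → ℝ) (KU : X → U → ℝ) (KV : X → V → ℝ) : ℝ :=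
  sInf { d | ∃ M : U → V → ℝ, Kern M ∧ d = ∑ x, pX x * tvDist (kcomp M KU x) (KV x) }

/-- Kullback–Leibler divergence on a finite set, `⊤` if absolute continuity fails. -/
noncomputable def KLfin {A : Type*} [Fintype A] (p q : A → ℝ) : EReal :=
  if ∀ a, q a = 0 → p a = 0 then ((∑ a, p a * Real.log (p a / q a) : ℝ) : EReal) else ⊤

lemma log_sum_ineq {ι : Type*} (s : Finset ι) (a b : ι → ℝ)
    (ha : ∀ i ∈ s, 0 ≤ a i) (hb : ∀ i ∈ s, 0 ≤ b i)
    (hab : ∀ i ∈ s, b i = 0 → a i = 0) :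
    (∑ i ∈ s, a i) * Real.log ((∑ i ∈ s, a i) / (∑ i ∈ s, b i))
      ≤ ∑ i ∈ s, a i * Real.log (a i / b i) := by
  set A := ∑ i ∈ s, a i with hA
  set B := ∑ i ∈ s, b i with hB
  rcases (Finset.sum_nonneg hb).eq_or_lt with hB0 | hBpos
  · have hb0 : ∀ i ∈ s, b i = 0 := by
      intro i hi
      have := (Finset.sum_eq_zero_iff_of_nonneg hb).mp hB0.symm
      exact this i hi
    have ha0 : ∀ i ∈ s, a i = 0 := fun i hi => hab i hi (hb0 i hi)
    have : A = 0 := Finset.sum_eq_zero ha0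
    rw [this, zero_mul]
    exact Finset.sum_nonneg fun i hi => by rw [ha0 i hi, zero_mul]
  · set w : ι → ℝ := fun i => b i / B
    set x : ι → ℝ := fun i => if b i = 0 then 0 else a i / b i
    have hw : ∀ i ∈ s, 0 ≤ w i := fun i hi => div_nonneg (hb i hi) hBpos.le
    have hw1 : ∑ i ∈ s, w i = 1 := by
      simp only [w, ← Finset.sum_div]
      exact div_self hBpos.ne'
    have hmem : ∀ i ∈ s, x i ∈ Set.Ici (0:ℝ) := by
      intro i hi
      by_cases h : b i = 0 <;> simp [x, h]
      exact div_nonneg (ha i hi) (hb i hi)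
    have hbx : ∀ i ∈ s, b i * x i = a i := by
      intro i hi
      by_cases h : b i = 0
      · simp [x, h, hab i hi h]
      · show b i * (if b i = 0 then 0 else a i / b i) = a i
        rw [if_neg h, mul_div_cancel₀ (a i) h]
    have hsum : ∑ i ∈ s, w i • x i = A / B := by
      simp only [smul_eq_mul, w, div_mul_eq_mul_div, ← Finset.sum_div]
      congr 1
      exact Finset.sum_congr rfl hbx
    have hJ := Real.convexOn_mul_log.map_sum_le hw hw1 hmem
    rw [hsum] at hJ
    have hJ' : B * ((A/B) * Real.log (A/B)) ≤ B * ∑ i ∈ s, w i • (x i * Real.log (x i)) :=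
      mul_le_mul_of_nonneg_left hJ hBpos.le
    calc A * Real.log (A / B) = B * ((A/B) * Real.log (A/B)) := by
          field_simp
          rw [mul_right_comm, mul_div_cancel_right₀ _ (hBpos.ne' : B ≠ 0)]
      _ ≤ B * ∑ i ∈ s, w i • (x i * Real.log (x i)) := hJ'
      _ = ∑ i ∈ s, a i * Real.log (x i) := by
          rw [Finset.mul_sum]
          refine Finset.sum_congr rfl fun i hi => ?_
          rw [smul_eq_mul]
          have : B * (w i * (x i * Real.log (x i))) = (b i * x i) * Real.log (x i) := by
            field_simp [w]; rw [show B * w i = b i from mul_div_cancel₀ (b i) (hBpos.ne' : B ≠ 0)]; ring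
          rw [this, hbx i hi]
      _ = ∑ i ∈ s, a i * Real.log (a i / b i) := by
          refine Finset.sum_congr rfl fun i hi => ?_
          by_cases h : b i = 0
          · simp [hab i hi h]
          · simp [x, h]

/-- sufficiency implies informativeness (data processing). -/
theorem stmt0 {Y X U V : Type*} [Fintype Y] [Fintype X] [Fintype U] [Fintype V]
    (p : Y → X → ℝ) (hp : JointFun p)
    (KU : X → U → ℝ) (hKU : Kern KU)
    (KV : X → V → ℝ) (hKV : Kern KV)
    (M : U → V → ℝ) (hM : Kern M)
    (hdeg : kcomp M KU = KV) :
    MIfin (jointOut p KV) ≤ MIfin (jointOut p KU) := by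
  set q := jointOut p KU with hqdef
  set r := jointOut p KV with hrdef
  have hq : ∀ y u, 0 ≤ q y u := fun y u =>
    Finset.sum_nonneg fun x _ => mul_nonneg (hp.1 y x) (hKU.1 x u)
  have hrq : ∀ y v, r y v = ∑ u, q y u * M u v := by
    intro y v
    simp only [hrdef, hqdef, jointOut, ← hdeg, kcomp, Finset.mul_sum, Finset.sum_mul]
    rw [Finset.sum_comm]
    apply Finset.sum_congr rfl; intro u _
    apply Finset.sum_congr rfl; intro x _
    ring
  have hrY : ∀ y, ∑ v, r y v = ∑ u, q y u := by
    intro y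
    simp only [hrq]
    rw [Finset.sum_comm]
    apply Finset.sum_congr rfl; intro u _
    rw [← Finset.mul_sum, hM.2 u, mul_one]
  have hrV : ∀ v, ∑ y, r y v = ∑ u, (∑ y', q y' u) * M u v := by
    intro v
    simp only [hrq]
    rw [Finset.sum_comm]
    apply Finset.sum_congr rfl; intro u _
    rw [Finset.sum_mul]
  unfold MIfin
  apply Finset.sum_le_sum; intro y _
  calc ∑ v, r y v * Real.log (r y v / ((∑ v', r y v') * (∑ y', r y' v)))
      ≤ ∑ v, ∑ u, (q y u * M u v) *
          Real.log ((q y u * M u v) / ((∑ u', q y u') * (∑ y', q y' u) * M u v)) := by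
        apply Finset.sum_le_sum; intro v _
        have key := log_sum_ineq Finset.univ (fun u => q y u * M u v)
          (fun u => (∑ u', q y u') * (∑ y', q y' u) * M u v)
          (fun u _ => mul_nonneg (hq y u) (hM.1 u v))
          (fun u _ => mul_nonneg (mul_nonneg (Finset.sum_nonneg fun u' _ => hq y u')
            (Finset.sum_nonneg fun y' _ => hq y' u)) (hM.1 u v))
          ?_
        · have h1 : ∑ u, q y u * M u v = r y v := (hrq y v).symm
          have h2 : ∑ u, (∑ u', q y u') * (∑ y', q y' u) * M u v
              = (∑ v', r y v') * (∑ y', r y' v) := by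
            rw [hrY y, hrV v, Finset.mul_sum]
            apply Finset.sum_congr rfl; intro u _; ring
          rw [h1, h2] at key
          exact key
        · intro u _ h
          show q y u * M u v = 0
          rcases mul_eq_zero.mp h with h' | hMz
          · rcases mul_eq_zero.mp h' with hY | hU
            · have : q y u ≤ 0 := by
                calc q y u ≤ ∑ u', q y u' :=
                      Finset.single_le_sum (fun u' _ => hq y u') (Finset.mem_univ u)
                  _ = 0 := hY
              rw [le_antisymm this (hq y u), zero_mul]
            · have : q y u ≤ 0 := by
                calc q y u ≤ ∑ y', q y' u :=
                      Finset.single_le_sum (fun y' _ => hq y' u) (Finset.mem_univ y)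
                  _ = 0 := hU
              rw [le_antisymm this (hq y u), zero_mul]
          · rw [hMz, mul_zero]
    _ = ∑ u, ∑ v, (q y u * Real.log (q y u / ((∑ u', q y u') * (∑ y', q y' u)))) * M u v := by
        rw [Finset.sum_comm]
        apply Finset.sum_congr rfl; intro u _
        apply Finset.sum_congr rfl; intro v _
        by_cases hMz : M u v = 0
        · simp [hMz]
        · rw [mul_div_mul_right _ _ hMz]; ring
    _ = ∑ u, q y u * Real.log (q y u / ((∑ u', q y u') * (∑ y', q y' u))) := by
        apply Finset.sum_congr rfl; intro u _
        rw [← Finset.mul_sum, hM.2 u, mul_one]
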